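/- Let α be a measurable space and ρ a probability measure on α × ℝ, with first marginal ρ.fst, and let condCDF ρ a denote the conditional cumulative distribution function of the second coordinate given the first. If for ρ.fst-almost every a ∈ α the function t ↦ condCDF ρ a t is continuous, then the pushforward of ρ under the map (a, t) ↦ (a, condCDF ρ a t) equals the product measure of ρ.fst with Lebesgue measure restricted to [0,1]. -/

import Mathlib

open MeasureTheory ProbabilityTheory Set Filter

open scoped Topology

/-- Probability integral transform for a continuous Stieltjes CDF: the measure of the
sublevel set `{t | F t ≤ y}` is `min y 1` (clamped at `0`). -/
lemma pit_aux (F : StieltjesFunction ℝ) (h0 : Filter.Tendsto F Filter.atBot (𝓝 0))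
    (h1 : Filter.Tendsto F Filter.atTop (𝓝 1)) (hF : Continuous F) (y : ℝ) :
    F.measure {t | F t ≤ y} = ENNReal.ofReal (min y 1) := by
  have hnn : ∀ t, 0 ≤ F t := fun t => F.mono.le_of_tendsto h0 t
  have hle1 : ∀ t, F t ≤ 1 := fun t => F.mono.ge_of_tendsto h1 t
  rcases lt_or_ge y 0 with hy | hy
  · have hset : {t | F t ≤ y} = (∅ : Set ℝ) := by
      ext t
      simp only [mem_setOf_eq, mem_empty_iff_false, iff_false, not_le]
      exact hy.trans_le (hnn t)
    rw [hset, measure_empty, eq_comm, ENNReal.ofReal_eq_zero]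
    exact (min_le_left _ _).trans hy.le
  rcases le_or_gt 1 y with hy1 | hy1
  · have hset : {t | F t ≤ y} = (univ : Set ℝ) :=
      eq_univ_of_forall fun t => (hle1 t).trans hy1
    rw [hset, F.measure_univ h0 h1, min_eq_right hy1]
    simp
  · rcases eq_empty_or_nonempty {t | F t ≤ y} with h | h
    · have hy0 : y ≤ 0 := by
        refine ge_of_tendsto h0 (Filter.Eventually.of_forall fun t => ?_)
        by_contra hlt
        exact (eq_empty_iff_forall_notMem.mp h) t (le_of_not_ge hlt)
      rw [h, measure_empty, eq_comm, ENNReal.ofReal_eq_zero]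
      exact (min_le_left _ _).trans hy0
    · have hbdd : BddAbove {t | F t ≤ y} := by
        by_contra hb
        have hall : ∀ t, F t ≤ y := by
          intro t
          obtain ⟨s, hs, hts⟩ := not_bddAbove_iff.mp hb t
          exact (F.mono hts.le).trans hs
        exact absurd (le_of_tendsto h1 (Filter.Eventually.of_forall hall))
          hy1.not_ge
      set c := sSup {t | F t ≤ y} with hc
      have hclosed : IsClosed {t | F t ≤ y} := isClosed_le hF continuous_const
      have hcmem : c ∈ {t | F t ≤ y} := hclosed.csSup_mem h hbdd
      have hSeq : {t | F t ≤ y} = Iic c := by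
        ext t
        exact ⟨fun ht => le_csSup hbdd ht, fun ht => (F.mono ht).trans hcmem⟩
      have hFc : F c = y := by
        refine le_antisymm hcmem ?_
        by_contra hlt
        push_neg at hlt
        have hev : ∀ᶠ t in 𝓝[>] c, F t < y :=
          ((hF.tendsto c).mono_left nhdsWithin_le_nhds).eventually (Iio_mem_nhds hlt)
        obtain ⟨t, hty, htc⟩ := (hev.and self_mem_nhdsWithin).exists
        exact absurd (le_csSup hbdd hty.le) (not_le.mpr htc)
      rw [hSeq, F.measure_Iic h0, hFc, sub_zero, min_eq_left hy1.le]

theorem conditional_probability_integral_transform {α : Type*} [MeasurableSpace α]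
    (ρ : Measure (α × ℝ)) [IsProbabilityMeasure ρ]
    (hcont : ∀ᵐ a ∂ρ.fst, Continuous (condCDF ρ a)) :
    Measure.map (fun q : α × ℝ => (q.1, condCDF ρ q.1 q.2)) ρ
      = ρ.fst.prod (volume.restrict (Set.Icc (0 : ℝ) 1)) := by
  -- joint measurability of `(a, t) ↦ condCDF ρ a t`
  have hm : Measurable fun q : α × ℝ => condCDF ρ q.1 q.2 := by
    have heq : (fun q : α × ℝ => condCDF ρ q.1 q.2)
        = fun q : α × ℝ => ⨅ r : ℚ, if q.2 < (r : ℝ) then condCDF ρ q.1 r else 1 := by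
      funext q
      obtain ⟨a, t⟩ := q
      have hne : Nonempty {r' : ℚ // t < (r' : ℝ)} := by
        obtain ⟨r, hr⟩ := exists_rat_gt t
        exact ⟨⟨r, hr⟩⟩
      have h := (condCDF ρ a).iInf_rat_gt_eq t
      have hbdd : BddBelow (Set.range fun r : ℚ =>
          if t < (r : ℝ) then condCDF ρ a r else 1) := by
        refine ⟨0, ?_⟩
        rintro x ⟨r, rfl⟩
        dsimp only
        split_ifs
        · exact condCDF_nonneg ρ a r
        · exact zero_le_one
      refine le_antisymm ?_ ?_
      · exact le_ciInf fun r => by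
          split_ifs with hr
          · exact (condCDF ρ a).mono hr.le
          · exact condCDF_le_one ρ a t
      · calc (⨅ r : ℚ, if t < (r : ℝ) then condCDF ρ a r else 1)
            ≤ ⨅ r : {r' : ℚ // t < (r' : ℝ)}, condCDF ρ a r :=
              le_ciInf fun r => (ciInf_le hbdd r.1).trans_eq (if_pos r.2)
          _ = condCDF ρ a t := h
    rw [heq]
    exact Measurable.iInf fun r =>
      Measurable.ite (measurableSet_lt measurable_snd measurable_const)
        ((measurable_condCDF ρ r).comp measurable_fst) measurable_const
  have hmap : Measurable fun q : α × ℝ => (q.1, condCDF ρ q.1 q.2) :=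
    measurable_fst.prodMk hm
  -- value of the restricted Lebesgue measure on `Iic y`
  have hvol : ∀ y : ℝ, (volume.restrict (Icc (0 : ℝ) 1)) (Iic y)
      = ENNReal.ofReal (min y 1) := by
    intro y
    rw [Measure.restrict_apply measurableSet_Iic]
    have : Iic y ∩ Icc (0 : ℝ) 1 = Icc 0 (min y 1) := by
      ext x
      simp only [mem_inter_iff, mem_Iic, mem_Icc, le_min_iff]
      tauto
    rw [this, Real.volume_Icc, sub_zero]
  refine (Measure.prod_eq_generateFrom MeasurableSpace.generateFrom_measurableSet
    ((borel_eq_generateFrom_Iic ℝ).symm.trans (BorelSpace.measurable_eq (α := ℝ)).symm)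
    MeasurableSpace.isPiSystem_measurableSet isPiSystem_Iic
    ρ.fst.toFiniteSpanningSetsIn ?_ ?_).symm
  · refine ⟨fun n : ℕ => Iic (n : ℝ), fun n => mem_range_self _, fun n => ?_, ?_⟩
    · rw [Measure.restrict_apply measurableSet_Iic]
      refine lt_of_le_of_lt (measure_mono inter_subset_right) ?_
      simp [Real.volume_Icc]
    · refine eq_univ_of_forall fun x => mem_iUnion.2 ?_
      obtain ⟨n, hn⟩ := exists_nat_ge x
      exact ⟨n, hn⟩
  · rintro s hs t ⟨y, rfl⟩
    rw [Measure.map_apply hmap (hs.prod measurableSet_Iic)]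
    have hpre : MeasurableSet ((fun q : α × ℝ => (q.1, condCDF ρ q.1 q.2)) ⁻¹'
        (s ×ˢ Iic y)) := hmap (hs.prod measurableSet_Iic)
    have key := lintegral_toKernel_mem (isCondKernelCDF_condCDF ρ) () hpre
    simp only [Kernel.const_apply] at key
    rw [← key]
    have hae : ∀ᵐ a ∂ρ.fst,
        ((isCondKernelCDF_condCDF ρ).toKernel _) ((), a)
            {t | (a, t) ∈ (fun q : α × ℝ => (q.1, condCDF ρ q.1 q.2)) ⁻¹' (s ×ˢ Iic y)}
          = s.indicator (fun _ => ENNReal.ofReal (min y 1)) a := by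
      filter_upwards [hcont] with a ha
      rw [IsCondKernelCDF.toKernel_apply]
      have hset : {t | (a, t) ∈ (fun q : α × ℝ => (q.1, condCDF ρ q.1 q.2)) ⁻¹'
          (s ×ˢ Iic y)} = {t | a ∈ s ∧ condCDF ρ a t ≤ y} := by
        ext t
        simp [Set.mem_preimage, Set.mem_prod, Set.mem_Iic]
      rw [hset]
      by_cases has : a ∈ s
      · have : {t | a ∈ s ∧ condCDF ρ a t ≤ y} = {t | condCDF ρ a t ≤ y} := by
          ext t; simp [has]
        rw [this, Set.indicator_of_mem has]
        exact pit_aux _ (tendsto_condCDF_atBot ρ a) (tendsto_condCDF_atTop ρ a) ha y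
      · have : {t | a ∈ s ∧ condCDF ρ a t ≤ y} = (∅ : Set ℝ) := by
          ext t; simp [has]
        rw [this, Set.indicator_of_notMem has, measure_empty]
    refine (lintegral_congr_ae hae).trans ?_
    rw [lintegral_indicator hs, setLIntegral_const,
      hvol y, mul_comm]
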